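/- For any integer k ≥ 2 and any nonnegative k-submodular function f : (k+1)^V → ℝ≥0, there exists x ∈ (k+1)^V with supp(x) = V such that f(x) ≥ f(y) for every y ∈ (k+1)^V; that is, the maximum of f is attained at a full partition of V. -/
import Mathlib


namespace Stmt1

variable {V : Type*}

/-- `(x ⊓ y)(e) = x(e)` if `x(e) = y(e)` and `0` otherwise. -/
def kinf {k : ℕ} (x y : V → Fin (k+1)) : V → Fin (k+1) :=
  fun e => if x e = y e then x e else 0

/-- `(x ⊔ y)(e) = x(e)` if `y(e) ∈ {0, x(e)}`; `= y(e)` if `x(e) = 0 ≠ y(e)`;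
`= 0` if `x(e), y(e)` are distinct and both nonzero. -/
def ksup {k : ℕ} (x y : V → Fin (k+1)) : V → Fin (k+1) :=
  fun e => if y e = 0 ∨ y e = x e then x e else if x e = 0 then y e else 0

def KSubmodular {k : ℕ} (f : (V → Fin (k+1)) → ℝ) : Prop :=
  ∀ x y : V → Fin (k+1), f x + f y ≥ f (ksup x y) + f (kinf x y)

/-- For `k ≥ 2` and a nonnegative `k`-submodular function `f`, the maximum of `f`
is attained at a point with full support (a partition of `V`). -/
theorem stmt1 {k : ℕ} (hk : 2 ≤ k) [Fintype V] [DecidableEq V]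
    (f : (V → Fin (k+1)) → ℝ) (hnn : ∀ x, 0 ≤ f x) (hf : KSubmodular f) :
    ∃ x : V → Fin (k+1), (∀ e, x e ≠ 0) ∧ ∀ y : V → Fin (k+1), f y ≤ f x := by
  classical
  obtain ⟨x0, -, hx0⟩ := Finset.exists_max_image (Finset.univ : Finset (V → Fin (k+1))) f
    ⟨fun _ => 0, Finset.mem_univ _⟩
  set S : Finset (V → Fin (k+1)) := Finset.univ.filter (fun x => ∀ y, f y ≤ f x) with hSdef
  have hS : S.Nonempty := by
    refine ⟨x0, ?_⟩
    simp only [hSdef, Finset.mem_filter, Finset.mem_univ, true_and]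
    exact fun y => hx0 y (Finset.mem_univ y)
  obtain ⟨x, hxS, hx⟩ := Finset.exists_max_image S
    (fun x => (Finset.univ.filter (fun e => x e ≠ 0)).card) hS
  have hxmax : ∀ y, f y ≤ f x := by
    simpa [hSdef] using hxS
  refine ⟨x, ?_, hxmax⟩
  by_contra h
  push_neg at h
  obtain ⟨e, he⟩ := h
  set i : Fin (k+1) := ⟨1, by omega⟩ with hi
  set j : Fin (k+1) := ⟨2, by omega⟩ with hj
  have hij : j ≠ i := by simp [hi, hj, Fin.ext_iff]
  have hi0 : i ≠ 0 := by simp [hi, Fin.ext_iff]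
  have hj0 : j ≠ 0 := by simp [hj, Fin.ext_iff]
  set xi := Function.update x e i with hxi
  set xj := Function.update x e j with hxj
  have hsup : ksup xi xj = x := by
    funext a
    by_cases ha : a = e
    · subst ha
      simp [ksup, hxi, hxj, hj0, hij, hi0, he]
    · simp [ksup, hxi, hxj, Function.update_of_ne ha]
  have hinf : kinf xi xj = x := by
    funext a
    by_cases ha : a = e
    · subst ha
      simp [kinf, hxi, hxj, Ne.symm hij, he]
    · simp [kinf, hxi, hxj, Function.update_of_ne ha]
  have hsub := hf xi xj
  rw [hsup, hinf] at hsub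
  have hxi_max : ∀ y, f y ≤ f xi := by
    have h1 : f xi ≤ f x := hxmax xi
    have h2 : f xj ≤ f x := hxmax xj
    have : f x ≤ f xi := by linarith
    exact fun y => le_trans (hxmax y) this
  have hxiS : xi ∈ S := by
    simp only [hSdef, Finset.mem_filter, Finset.mem_univ, true_and]
    exact hxi_max
  have hcard := hx xi hxiS
  have hss : (Finset.univ.filter (fun a => x a ≠ 0)) ⊂
      (Finset.univ.filter (fun a => xi a ≠ 0)) := by
    constructor
    · intro a ha
      simp only [Finset.mem_filter, Finset.mem_univ, true_and] at ha ⊢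
      by_cases hae : a = e
      · subst hae; exact absurd he ha
      · rwa [hxi, Function.update_of_ne hae]
    · intro hcon
      have heS : e ∈ Finset.univ.filter (fun a => xi a ≠ 0) := by
        simp [hxi, hi0]
      have := hcon heS
      simp [he] at this
  have := Finset.card_lt_card hss
  omega

end Stmt1
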